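/- Let 𝔸 be a left s-unital nonunital ring and M a left module over 𝔸 such that every element of M lies in the additive subgroup of M generated by the set {a • x : a ∈ 𝔸, x ∈ M}. Then M is s-unital: for every m ∈ M there exists e ∈ 𝔸 with e • m = m. (This is the 'firm implies s-unital' direction: if the canonical map 𝔸 ⊗ M → M is surjective and 𝔸 is left s-unital, then M is s-unital.) -/

import Mathlib

/-- Tominaga's trick: a left s-unital ring has a common left unit for any two elements. -/
lemma two_left_unit {𝔸 : Type*} [NonUnitalRing 𝔸]
    (hA : ∀ x : 𝔸, ∃ e : 𝔸, e * x = x) (x y : 𝔸) :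
    ∃ g : 𝔸, g * x = x ∧ g * y = y := by
  obtain ⟨e, he⟩ := hA x
  obtain ⟨f, hf⟩ := hA (y - e * y)
  refine ⟨e + f - f * e, ?_, ?_⟩
  · rw [sub_mul, add_mul, he, mul_assoc, he]; abel
  · have h2 : f * y - f * (e * y) = y - e * y := by rw [← mul_sub]; exact hf
    rw [sub_mul, add_mul, mul_assoc, add_sub_assoc, h2]; abel

/-- let `𝔸` be a left s-unital nonunital ring and `M` a left
`𝔸`-module (action `σ`) such that every element of `M` lies in the additive
subgroup generated by `{σ a x : a ∈ 𝔸, x ∈ M}` (i.e. the canonical map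
`𝔸 ⊗ M → M` is surjective; `M` is "firm-surjective").  Then `M` is s-unital. -/
theorem sUnital_of_generated_by_smuls
    (𝔸 M : Type*) [NonUnitalRing 𝔸] [AddCommGroup M]
    (σ : 𝔸 → M → M)
    (σ_add : ∀ (a b : 𝔸) (m : M), σ (a + b) m = σ a m + σ b m)
    (σ_madd : ∀ (a : 𝔸) (m m' : M), σ a (m + m') = σ a m + σ a m')
    (σ_mul : ∀ (a b : 𝔸) (m : M), σ (a * b) m = σ a (σ b m))
    (hA : ∀ x : 𝔸, ∃ e : 𝔸, e * x = x)
    (hgen : ∀ m : M,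
      m ∈ AddSubgroup.closure {x : M | ∃ (a : 𝔸) (y : M), x = σ a y}) :
    ∀ m : M, ∃ e : 𝔸, σ e m = m := by
  have σ_zero : ∀ a : 𝔸, σ a 0 = 0 := by
    intro a
    have := σ_madd a 0 0
    simpa using this.symm
  have σ_neg : ∀ (a : 𝔸) (m : M), σ a (-m) = -σ a m := by
    intro a m
    have h := σ_madd a m (-m)
    rw [add_neg_cancel, σ_zero] at h
    exact eq_neg_of_add_eq_zero_right h.symm
  -- strengthen: if e is a left unit for e₁ and σ e₁ m = m then σ e m = m
  have key : ∀ m : M, ∃ e₁ : 𝔸, ∀ e : 𝔸, e * e₁ = e₁ → σ e m = m := by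
    intro m
    induction hgen m using AddSubgroup.closure_induction with
    | mem x hx =>
        obtain ⟨a, y, rfl⟩ := hx
        exact ⟨a, fun e he => by rw [← σ_mul, he]⟩
    | zero => exact ⟨0, fun e _ => σ_zero e⟩
    | add x y _ _ hx hy =>
        obtain ⟨e₁, h₁⟩ := hx
        obtain ⟨e₂, h₂⟩ := hy
        obtain ⟨g, hg₁, hg₂⟩ := two_left_unit hA e₁ e₂
        refine ⟨g, fun e he => ?_⟩
        have he₁ : e * e₁ = e₁ := by rw [← hg₁, ← mul_assoc, he, hg₁]
        have he₂ : e * e₂ = e₂ := by rw [← hg₂, ← mul_assoc, he, hg₂]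
        rw [σ_madd, h₁ e he₁, h₂ e he₂]
    | neg x _ hx =>
        obtain ⟨e₁, h₁⟩ := hx
        exact ⟨e₁, fun e he => by rw [σ_neg, h₁ e he]⟩
  intro m
  obtain ⟨e₁, h₁⟩ := key m
  obtain ⟨e, he⟩ := hA e₁
  exact ⟨e, h₁ e he⟩
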